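/- Let B be a finite algebra, π a meet-irreducible congruence with unique upper cover μ, and suppose there is an idempotent unary polynomial e of B with image U = {x, y} a two-element (π, μ)-minimal set such that π restricted to U is trivial and μ = π ∨ Cg(x, y). Then the congruence lattice of B is the disjoint union of the interval [⊥, π] and the interval [Cg(x,y), ⊤]; that is, every congruence θ of B either satisfies θ ≤ π or θ ≥ Cg(x, y). -/
import Mathlib


/-- A purely functional first-order signature. -/
structure Signature where
  ops : Type
  arity : ops → ℕ

/-- An algebra for a signature: an interpretation of each operation symbol. -/
structure UAlg (σ : Signature) (A : Type) where
  interp : ∀ o : σ.ops, (Fin (σ.arity o) → A) → A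

/-- Terms in `n` variables over a signature. -/
inductive Term (σ : Signature) (n : ℕ) : Type
  | var : Fin n → Term σ n
  | op : (o : σ.ops) → (Fin (σ.arity o) → Term σ n) → Term σ n

/-- Evaluation of a term at a tuple. -/
def Term.eval {σ : Signature} {A : Type} (Alg : UAlg σ A) {n : ℕ} :
    Term σ n → (Fin n → A) → A
  | .var i, v => v i
  | .op o ts, v => Alg.interp o fun j => (ts j).eval Alg v

/-- A congruence: an equivalence relation compatible with all operations. -/
def IsCongruence {σ : Signature} {A : Type} (Alg : UAlg σ A) (r : A → A → Prop) : Prop :=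
  Equivalence r ∧ ∀ (o : σ.ops) (x y : Fin (σ.arity o) → A),
    (∀ i, r (x i) (y i)) → r (Alg.interp o x) (Alg.interp o y)

/-- A `k`-ary polynomial operation: a term operation with parameters. -/
def IsPolynomial {σ : Signature} {A : Type} (Alg : UAlg σ A) {k : ℕ}
    (f : (Fin k → A) → A) : Prop :=
  ∃ (n : ℕ) (t : Term σ (k + n)) (params : Fin n → A),
    ∀ x : Fin k → A, f x = t.eval Alg (Fin.append x params)

/-- A unary polynomial operation. -/
def IsUnaryPolynomial {σ : Signature} {A : Type} (Alg : UAlg σ A) (f : A → A) : Prop :=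
  IsPolynomial Alg (k := 1) fun x => f (x 0)

/-- The term condition TermCond(α, β; γ). -/
def TermCond {σ : Signature} {A : Type} (Alg : UAlg σ A) (α β γ : A → A → Prop) : Prop :=
  ∀ (n m : ℕ) (t : Term σ (n + m)) (a₁ a₂ : Fin n → A) (b₁ b₂ : Fin m → A),
    (∀ i, α (a₁ i) (a₂ i)) → (∀ i, β (b₁ i) (b₂ i)) →
    γ (t.eval Alg (Fin.append a₁ b₁)) (t.eval Alg (Fin.append a₁ b₂)) →
    γ (t.eval Alg (Fin.append a₂ b₁)) (t.eval Alg (Fin.append a₂ b₂))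

/-- β is strongly abelian over γ. -/
def StronglyAbelianOver {σ : Signature} {A : Type} (Alg : UAlg σ A)
    (β γ : A → A → Prop) : Prop :=
  ∀ (n m : ℕ) (t : Term σ (n + m)) (a₁ a₂ : Fin n → A) (b₁ b₂ b₃ : Fin m → A),
    (∀ i, β (a₁ i) (a₂ i)) → (∀ i, β (b₁ i) (b₂ i)) → (∀ i, β (b₂ i) (b₃ i)) →
    γ (t.eval Alg (Fin.append a₁ b₁)) (t.eval Alg (Fin.append a₂ b₂)) →
    γ (t.eval Alg (Fin.append a₁ b₃)) (t.eval Alg (Fin.append a₂ b₃))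

/-- The least congruence containing a binary relation. -/
def congClosure {σ : Signature} {A : Type} (Alg : UAlg σ A) (R : A → A → Prop) :
    A → A → Prop :=
  fun a b => ∀ r, IsCongruence Alg r → (∀ x y, R x y → r x y) → r a b

/-- A subset closed under the operations. -/
def IsSubalgebra {σ : Signature} {A : Type} (Alg : UAlg σ A) (s : Set A) : Prop :=
  ∀ (o : σ.ops) (x : Fin (σ.arity o) → A), (∀ j, x j ∈ s) → Alg.interp o x ∈ s

/-- The power algebra `A^I`. -/
def UAlg.pow {σ : Signature} {A : Type} (Alg : UAlg σ A) (I : Type) :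
    UAlg σ (I → A) :=
  ⟨fun o x i => Alg.interp o fun j => x j i⟩

/-- The product of a family of algebras. -/
def UAlg.pi {σ : Signature} {ι : Type} {A : ι → Type} (Alg : ∀ i, UAlg σ (A i)) :
    UAlg σ (∀ i, A i) :=
  ⟨fun o x i => (Alg i).interp o fun j => x j i⟩

/-- The binary product of two algebras. -/
def UAlg.prod2 {σ : Signature} {A B : Type} (AlgA : UAlg σ A) (AlgB : UAlg σ B) :
    UAlg σ (A × B) :=
  ⟨fun o x => (AlgA.interp o fun j => (x j).1, AlgB.interp o fun j => (x j).2)⟩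

/-- The algebra structure on a subalgebra. -/
def UAlg.sub {σ : Signature} {A : Type} (Alg : UAlg σ A) (s : Set A)
    (hs : IsSubalgebra Alg s) : UAlg σ s :=
  ⟨fun o x => ⟨Alg.interp o fun j => (x j : A), hs o _ fun j => (x j).2⟩⟩

/-- Homomorphisms of algebras. -/
def IsHom {σ : Signature} {A B : Type} (AlgA : UAlg σ A) (AlgB : UAlg σ B)
    (f : A → B) : Prop :=
  ∀ (o : σ.ops) (x : Fin (σ.arity o) → A), f (AlgA.interp o x) = AlgB.interp o (f ∘ x)

/-- An idempotent unary polynomial. -/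
def IsIdempotentPoly {σ : Signature} {A : Type} (Alg : UAlg σ A) (e : A → A) : Prop :=
  IsUnaryPolynomial Alg e ∧ ∀ x, e (e x) = e x

/-- A (⊥, δ)-minimal set. -/
def IsMinimalSet {σ : Signature} {A : Type} (Alg : UAlg σ A) (δ : A → A → Prop)
    (U : Set A) : Prop :=
  (∃ e, IsIdempotentPoly Alg e ∧ U = Set.range e ∧ ∃ a b, δ a b ∧ e a ≠ e b) ∧
  ∀ e', IsIdempotentPoly Alg e' → Set.range e' ⊆ U → (∃ a b, δ a b ∧ e' a ≠ e' b) →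
    Set.range e' = U

/-- μ is an atom of the congruence lattice. -/
def IsAtomCong {σ : Signature} {A : Type} (Alg : UAlg σ A) (μ : A → A → Prop) : Prop :=
  IsCongruence Alg μ ∧ μ ≠ (fun a b => a = b) ∧
  ∀ θ, IsCongruence Alg θ → (∀ a b, θ a b → μ a b) → θ = (fun a b => a = b) ∨ θ = μ

/-- A (⊥, μ)-trace in a minimal set U. -/
def IsTrace {A : Type} (μ : A → A → Prop) (U N : Set A) : Prop :=
  (∃ a ∈ U, N = {x ∈ U | μ x a}) ∧ ∃ x ∈ N, ∃ y ∈ N, x ≠ y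

/-- The body of a minimal set: the union of its traces. -/
def Body {A : Type} (μ : A → A → Prop) (U : Set A) : Set A :=
  {x | ∃ N, IsTrace μ U N ∧ x ∈ N}

/-- Polynomial permutations of U (as functions A → A which are bijective on U). -/
def PolPermFun {σ : Signature} {A : Type} (Alg : UAlg σ A) (U : Set A) : Set (A → A) :=
  { p | IsUnaryPolynomial Alg p ∧ Set.BijOn p U U }

/-- Subdirect irreducibility: there is a pair contained in every nontrivial congruence. -/
def IsSI {σ : Signature} {B : Type} (Alg : UAlg σ B) : Prop :=
  ∃ a b : B, a ≠ b ∧ ∀ θ, IsCongruence Alg θ → θ ≠ (fun x y => x = y) → θ a b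

/-- The subalgebra generated by a set. -/
def genSub {σ : Signature} {B : Type} (Alg : UAlg σ B) (s : Set B) : Set B :=
  ⋂₀ {t | IsSubalgebra Alg t ∧ s ⊆ t}

/-- A strongly solvable congruence: connected to ⊥ by strongly abelian covers. -/
def IsStronglySolvable {σ : Signature} {A : Type} (Alg : UAlg σ A)
    (s : A → A → Prop) : Prop :=
  ∃ (n : ℕ) (c : Fin (n + 1) → (A → A → Prop)),
    c 0 = (fun a b => a = b) ∧ c (Fin.last n) = s ∧
    (∀ i, IsCongruence Alg (c i)) ∧
    ∀ i : Fin n, (∀ a b, c i.castSucc a b → c i.succ a b) ∧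
      StronglyAbelianOver Alg (c i.succ) (c i.castSucc)

/-- The set of n-ary term operations of an algebra. -/
def TermFun {σ : Signature} {A : Type} (Alg : UAlg σ A) (n : ℕ) :
    Set ((Fin n → A) → A) :=
  { g | ∃ t : Term σ n, g = fun v => t.eval Alg v }

/-- Term evaluation preserves congruences. -/
lemma eval_congr {σ : Signature} {A : Type} (Alg : UAlg σ A) {r : A → A → Prop}
    (hr : IsCongruence Alg r) : ∀ {n : ℕ} (t : Term σ n) (v w : Fin n → A),
    (∀ i, r (v i) (w i)) → r (t.eval Alg v) (t.eval Alg w) := by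
  intro n t
  induction t with
  | var i => intro v w h; exact h i
  | op o ts ih => intro v w h; exact hr.2 o _ _ fun j => ih j v w h

/-- Unary polynomials preserve congruences. -/
lemma upoly_congr {σ : Signature} {A : Type} (Alg : UAlg σ A) {r : A → A → Prop}
    (hr : IsCongruence Alg r) {e : A → A} (he : IsUnaryPolynomial Alg e)
    {a b : A} (hab : r a b) : r (e a) (e b) := by
  obtain ⟨n, t, params, hspec⟩ := he
  have ha := hspec (fun _ => a)
  have hb := hspec (fun _ => b)
  simp only at ha hb
  rw [ha, hb]
  apply eval_congr Alg hr
  intro i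
  refine Fin.addCases (fun j => ?_) (fun j => ?_) i
  · simp only [Fin.append_left]; exact hab
  · simp only [Fin.append_right]; exact hr.1.refl _

/-- Single-coordinate compatibility for a congruence. -/
lemma one_coord {σ : Signature} {A : Type} (Alg : UAlg σ A) {r : A → A → Prop}
    (hr : IsCongruence Alg r) (o : σ.ops) (v : Fin (σ.arity o) → A)
    (i : Fin (σ.arity o)) (b : A) (h : r (v i) b) :
    r (Alg.interp o v) (Alg.interp o (Function.update v i b)) := by
  apply hr.2
  intro j
  by_cases hj : j = i
  · subst hj; simp [Function.update_self, h]
  · simp [Function.update_of_ne hj, hr.1.refl]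

/-- The reflexive transitive closure of the union of two congruences is a congruence. -/
lemma join_congruence {σ : Signature} {A : Type} (Alg : UAlg σ A)
    {θ π : A → A → Prop} (hθ : IsCongruence Alg θ) (hπ : IsCongruence Alg π) :
    IsCongruence Alg (Relation.ReflTransGen (fun a b => θ a b ∨ π a b)) := by
  set R : A → A → Prop := fun a b => θ a b ∨ π a b with hR
  have hRsymm : ∀ a b, R a b → R b a := by
    intro a b h
    rcases h with h | h
    · exact Or.inl (hθ.1.symm h)
    · exact Or.inr (hπ.1.symm h)
  classical
  constructor
  · constructor
    · intro a; exact Relation.ReflTransGen.refl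
    · intro a b h
      induction h with
      | refl => exact Relation.ReflTransGen.refl
      | tail _ hbc ih =>
        exact (Relation.ReflTransGen.single (hRsymm _ _ hbc)).trans ih
    · intro a b c hab hbc; exact hab.trans hbc
  · intro o v w h
    -- first: one-coordinate version for the closure
    have key : ∀ (u : Fin (σ.arity o) → A) (i : Fin (σ.arity o)) (b : A),
        Relation.ReflTransGen R (u i) b →
        Relation.ReflTransGen R (Alg.interp o u) (Alg.interp o (Function.update u i b)) := by
      intro u i b hb
      induction hb with
      | refl => rw [Function.update_eq_self]
      | @tail b' c' hub hbc ih =>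
        have step : R (Alg.interp o (Function.update u i b'))
            (Alg.interp o (Function.update u i c')) := by
          have : Function.update u i c' = Function.update (Function.update u i b') i c' := by
            simp [Function.update_idem]
          rw [this]
          rcases hbc with h' | h'
          · exact Or.inl (one_coord Alg hθ o _ i c' (by simpa using h'))
          · exact Or.inr (one_coord Alg hπ o _ i c' (by simpa using h'))
        exact ih.tail step
    -- now change coordinates one at a time over a Finset
    have main : ∀ s : Finset (Fin (σ.arity o)),
        Relation.ReflTransGen R (Alg.interp o v)
          (Alg.interp o (fun j => if j ∈ s then w j else v j)) := by
      intro s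
      induction s using Finset.induction with
      | empty => exact Relation.ReflTransGen.refl
      | @insert i s hi ih =>
        have heq : (fun j => if j ∈ insert i s then w j else v j)
            = Function.update (fun j => if j ∈ s then w j else v j) i (w i) := by
          funext j
          by_cases hj : j = i
          · subst hj; simp [hi]
          · simp [Function.update_of_ne hj, hj]
        rw [heq]
        refine ih.trans (key _ i (w i) ?_)
        simp [hi]
        exact h i
    have := main Finset.univ
    simpa using this

/-- If π is meet-irreducible with unique upper cover μ = π ∨ Cg(x,y) and
there is an idempotent unary polynomial e with two-element image {x, y} on which π is
trivial, then every congruence θ satisfies θ ≤ π or θ ≥ Cg(x, y) (i.e., θ x y). -/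
theorem stmt_12 {σ : Signature} {B : Type} [Fintype B] (Alg : UAlg σ B)
    (π μ : B → B → Prop) (hπ : IsCongruence Alg π) (hμ : IsCongruence Alg μ)
    (x y : B) (hxy : x ≠ y)
    (e : B → B) (he : IsUnaryPolynomial Alg e) (hidem : ∀ a, e (e a) = e a)
    (hrange : Set.range e = {x, y})
    (hπxy : ¬ π x y)
    (hπμ : ∀ a b, π a b → μ a b) (hπμ' : π ≠ μ)
    (hμdef : μ = congClosure Alg
      (fun a b => π a b ∨ (a = x ∧ b = y) ∨ (a = y ∧ b = x) ∨ a = b))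
    (hMI : ∀ θ, IsCongruence Alg θ → (∀ a b, π a b → θ a b) → θ ≠ π →
      ∀ a b, μ a b → θ a b) :
    ∀ θ, IsCongruence Alg θ → (∀ a b, θ a b → π a b) ∨ θ x y := by
  intro θ hθ
  by_cases hle : ∀ a b, θ a b → π a b
  · exact Or.inl hle
  right
  push_neg at hle
  obtain ⟨a₀, b₀, hθab, hnπab⟩ := hle
  set R : B → B → Prop := fun a b => θ a b ∨ π a b with hRdef
  set J : B → B → Prop := Relation.ReflTransGen R with hJdef
  have hJ : IsCongruence Alg J := join_congruence Alg hθ hπ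
  have hπJ : ∀ a b, π a b → J a b := fun a b h => Relation.ReflTransGen.single (Or.inr h)
  have hJne : J ≠ π := by
    intro hcontra
    exact hnπab (hcontra ▸ Relation.ReflTransGen.single (Or.inl hθab))
  have hμJ := hMI J hJ hπJ hJne
  have hμxy : μ x y := by
    rw [hμdef]
    intro r hr hsub
    exact hsub x y (Or.inr (Or.inl ⟨rfl, rfl⟩))
  have hJxy : J x y := hμJ x y hμxy
  -- e fixes x and y
  have hex : e x = x := by
    have : x ∈ Set.range e := by rw [hrange]; exact Or.inl rfl
    obtain ⟨a, ha⟩ := this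
    rw [← ha, hidem]
  have hey : e y = y := by
    have : y ∈ Set.range e := by rw [hrange]; exact Or.inr rfl
    obtain ⟨a, ha⟩ := this
    rw [← ha, hidem]
  -- π collapses under e
  have hπcollapse : ∀ a b, π a b → e a = e b := by
    intro a b hab
    have hea : e a ∈ ({x, y} : Set B) := hrange ▸ Set.mem_range_self a
    have heb : e b ∈ ({x, y} : Set B) := hrange ▸ Set.mem_range_self b
    have hπe : π (e a) (e b) := upoly_congr Alg hπ he hab
    simp only [Set.mem_insert_iff, Set.mem_singleton_iff] at hea heb
    rcases hea with h1 | h1 <;> rcases heb with h2 | h2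
    · rw [h1, h2]
    · rw [h1, h2] at hπe; exact absurd hπe hπxy
    · rw [h1, h2] at hπe; exact absurd (hπ.1.symm hπe) hπxy
    · rw [h1, h2]
  -- main induction: J a b → θ (e a) (e b)
  have claim : ∀ a b, J a b → θ (e a) (e b) := by
    intro a b hab
    induction hab with
    | refl => exact hθ.1.refl _
    | tail _ hbc ih =>
      rcases hbc with h' | h'
      · exact hθ.1.trans ih (upoly_congr Alg hθ he h')
      · rw [← hπcollapse _ _ h']; exact ih
  have := claim x y hJxy
  rwa [hex, hey] at this
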